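/- arXiv:1404.5428 — 3 statements merged into one kernel-verified Lean document; each statement's English description precedes it below -/
import Mathlib

section
/- Let f : ℕ → ℕ be monotonically decreasing with domain {1,…,m}, and define g(p) = f(m+1−p). For an instance I with task sequence T₁,…,T_n, k agents of capacity m, construct the reversed instance I' with task sequence T_n,…,T₁ and cost function g. If x' = (x'₁,…,x'_n) is an optimal decision sequence for I' under cost ∑ g(p_t)·T'_t, then x = (x'_n,…,x'₁) is an optimal decision sequence for I under cost ∑ f(p_t)·T_t, and the two optimal costs are equal. -/
open Finset

/-- The (1-indexed) position of task `t` under decision sequence `x`: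
one plus the number of earlier tasks assigned to the same agent. -/
def posOf {n k : ℕ} (x : Fin n → Fin k) (t : Fin n) : ℕ :=
  1 + (Finset.univ.filter (fun s : Fin n => s < t ∧ x s = x t)).card

/-- A decision sequence is valid when each of the `k` agents receives exactly
`m` tasks. -/
def validSeq {n k : ℕ} (m : ℕ) (x : Fin n → Fin k) : Prop :=
  ∀ r : Fin k, (Finset.univ.filter (fun t : Fin n => x t = r)).card = m

/-- Total cost of decision sequence `x` on task sequence `T` under positional
weight function `h`. -/
def totalCost {n k : ℕ} (h : ℕ → ℕ) (T : Fin n → ℕ) (x : Fin n → Fin k) : ℕ :=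
  ∑ t : Fin n, h (posOf x t) * T t

lemma valid_rev {n k m : ℕ} {x : Fin n → Fin k} (hx : validSeq m x) :
    validSeq m (x ∘ Fin.rev) := by
  intro r
  rw [← hx r]
  apply Finset.card_bij' (fun s _ => Fin.rev s) (fun s _ => Fin.rev s) <;>
    simp [Fin.rev_rev]

lemma pos_rev {n k m : ℕ} {x : Fin n → Fin k} (hx : validSeq m x) (t : Fin n) :
    posOf (x ∘ Fin.rev) t = m + 1 - posOf x (Fin.rev t) ∧ posOf x (Fin.rev t) ≤ m := by
  have hcb : (Finset.univ.filter (fun s : Fin n => s < t ∧ x (Fin.rev s) = x (Fin.rev t))).card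
      = (Finset.univ.filter (fun u : Fin n => Fin.rev t < u ∧ x u = x (Fin.rev t))).card := by
    apply Finset.card_bij' (fun s _ => Fin.rev s) (fun s _ => Fin.rev s)
    · intro s hs
      simp only [Finset.mem_filter, Finset.mem_univ, true_and] at hs ⊢
      exact ⟨Fin.rev_lt_rev.mpr hs.1, hs.2⟩
    · intro s hs
      simp only [Finset.mem_filter, Finset.mem_univ, true_and] at hs ⊢
      refine ⟨?_, by rw [Fin.rev_rev]; exact hs.2⟩
      rw [← Fin.rev_rev t]
      exact Fin.rev_lt_rev.mpr hs.1
    · intro s _; exact Fin.rev_rev s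
    · intro s _; exact Fin.rev_rev s
  have hsplit : Finset.univ.filter (fun u : Fin n => x u = x (Fin.rev t))
      = insert (Fin.rev t)
        ((Finset.univ.filter (fun u : Fin n => u < Fin.rev t ∧ x u = x (Fin.rev t))) ∪
        (Finset.univ.filter (fun u : Fin n => Fin.rev t < u ∧ x u = x (Fin.rev t)))) := by
    ext u
    simp only [Finset.mem_filter, Finset.mem_insert, Finset.mem_union, Finset.mem_univ,
      true_and]
    constructor
    · intro h
      rcases lt_trichotomy u (Fin.rev t) with h1 | h1 | h1
      · exact Or.inr (Or.inl ⟨h1, h⟩)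
      · exact Or.inl h1
      · exact Or.inr (Or.inr ⟨h1, h⟩)
    · rintro (h | ⟨_, h⟩ | ⟨_, h⟩) <;> simp_all
  have hdisj : Disjoint
      (Finset.univ.filter (fun u : Fin n => u < Fin.rev t ∧ x u = x (Fin.rev t)))
      (Finset.univ.filter (fun u : Fin n => Fin.rev t < u ∧ x u = x (Fin.rev t))) := by
    rw [Finset.disjoint_left]
    intro u h1 h2
    simp only [Finset.mem_filter] at h1 h2
    exact absurd (h1.2.1.trans h2.2.1) (lt_irrefl u)
  have hnotmem : Fin.rev t ∉
      (Finset.univ.filter (fun u : Fin n => u < Fin.rev t ∧ x u = x (Fin.rev t))) ∪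
      (Finset.univ.filter (fun u : Fin n => Fin.rev t < u ∧ x u = x (Fin.rev t))) := by
    simp
  have hm := hx (x (Fin.rev t))
  rw [hsplit, Finset.card_insert_of_notMem hnotmem,
    Finset.card_union_of_disjoint hdisj] at hm
  unfold posOf
  simp only [Function.comp_apply]
  rw [hcb]
  omega

lemma cost_rev {n k m : ℕ} {f g : ℕ → ℕ} (hg : ∀ p, g p = f (m + 1 - p))
    (T : Fin n → ℕ) {x : Fin n → Fin k} (hx : validSeq m x) :
    totalCost f T (x ∘ Fin.rev) = totalCost g (T ∘ Fin.rev) x := by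
  unfold totalCost
  apply Fintype.sum_bijective Fin.rev Fin.rev_bijective
  intro t
  rw [(pos_rev hx t).1, ← hg, Function.comp_apply, Fin.rev_rev]

/-- Reduction between decreasing and increasing positional functions by
reversing the task sequence: let `f` be monotonically decreasing and
`g p = f (m + 1 − p)`.  If `x'` is an optimal decision sequence for the
reversed instance `I' = (T ∘ rev)` under positional cost `g`, then
`x = x' ∘ rev` is optimal for the original instance `I = T` under positional
cost `f`, and the two optimal costs are equal. -/
theorem reversal_reduction (k m : ℕ) (f : ℕ → ℕ)
    (hf : ∀ p q : ℕ, p ≤ q → f q ≤ f p)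
    (g : ℕ → ℕ) (hg : ∀ p, g p = f (m + 1 - p))
    (T : Fin (k * m) → ℕ) (x' : Fin (k * m) → Fin k)
    (hvalid' : validSeq m x')
    (hopt' : ∀ y : Fin (k * m) → Fin k, validSeq m y →
      totalCost g (T ∘ Fin.rev) x' ≤ totalCost g (T ∘ Fin.rev) y) :
    validSeq m (x' ∘ Fin.rev) ∧
    (∀ y : Fin (k * m) → Fin k, validSeq m y →
      totalCost f T (x' ∘ Fin.rev) ≤ totalCost f T y) ∧
    totalCost f T (x' ∘ Fin.rev) = totalCost g (T ∘ Fin.rev) x' := by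
  have hval := valid_rev (m := m) hvalid'
  have hcost := cost_rev (n := k * m) hg T hvalid'
  refine ⟨hval, ?_, hcost⟩
  intro y hy
  have hyr : validSeq m (y ∘ Fin.rev) := valid_rev hy
  have h2 := cost_rev (n := k * m) hg T hyr
  have hyy : (y ∘ Fin.rev) ∘ Fin.rev = y := by
    funext t; simp [Fin.rev_rev]
  rw [hyy] at h2
  rw [hcost, h2]
  exact hopt' _ hyr
end

section
/- Consider k agents with capacities 0 < m₁ ≤ m₂ ≤ … ≤ m_k, a decreasing weight function applied via g(q) (cost g(q)·T when a task is assigned to an agent of remaining capacity q, where g is increasing), and a binary task sequence with T₁ = L (the larger value). Then for any decision sequence x with x₁ = γ > 1 there exists a decision sequence x* with x*₁ = 1 whose total cost is at most that of x. -/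
open Finset

/-- Remaining capacity of agent `r` just before task `t` is allocated. -/
def remCap {n k : ℕ} (m : Fin k → ℕ) (x : Fin n → Fin k) (t : Fin n) (r : Fin k) : ℕ :=
  m r - (Finset.univ.filter (fun s : Fin n => s < t ∧ x s = r)).card

/-- Validity for variable-sized positional allocation: agent `r` receives
exactly `m r` tasks. -/
def vspaValid {n k : ℕ} (m : Fin k → ℕ) (x : Fin n → Fin k) : Prop :=
  ∀ r : Fin k, (Finset.univ.filter (fun t : Fin n => x t = r)).card = m r

/-- VSPA cost: assigning task `t` to agent `r` while `r` has remaining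
capacity `q` costs `g q * T t`. -/
def vspaCost {n k : ℕ} (g : ℕ → ℕ) (m : Fin k → ℕ) (T : Fin n → ℕ)
    (x : Fin n → Fin k) : ℕ :=
  ∑ t : Fin n, g (remCap m x t (x t)) * T t

/-! ### Auxiliary rank machinery -/

/-- rank of `t` relative to finset `S`: number of elements of `S` below `t`. -/
def rk {n : ℕ} (S : Finset (Fin n)) (t : Fin n) : ℕ := (S.filter (· < t)).card

/-- Fiber of `x` over agent `r`. -/
def fib {n k : ℕ} (x : Fin n → Fin k) (r : Fin k) : Finset (Fin n) :=
  Finset.univ.filter (fun s => x s = r)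

/-- Cost incurred within one agent of capacity `μ` receiving the tasks `S`. -/
def agCost {n : ℕ} (g : ℕ → ℕ) (T : Fin n → ℕ) (μ : ℕ) (S : Finset (Fin n)) : ℕ :=
  ∑ t ∈ S, g (μ - rk S t) * T t

lemma rk_mono {n : ℕ} (S : Finset (Fin n)) {a b : Fin n} (h : a ≤ b) :
    rk S a ≤ rk S b := by
  apply Finset.card_le_card
  intro s hs
  simp only [mem_filter] at *
  exact ⟨hs.1, lt_of_lt_of_le hs.2 h⟩

lemma rk_lt_rk {n : ℕ} {S : Finset (Fin n)} {a b : Fin n} (ha : a ∈ S) (h : a < b) :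
    rk S a < rk S b := by
  apply Finset.card_lt_card
  constructor
  · intro s hs
    simp only [mem_filter] at *
    exact ⟨hs.1, lt_trans hs.2 h⟩
  · intro hsub
    have : a ∈ S.filter (· < b) := by simp [ha, h]
    have := hsub this
    simp at this

lemma rk_lt_card {n : ℕ} {S : Finset (Fin n)} {a : Fin n} (ha : a ∈ S) :
    rk S a < S.card := by
  apply Finset.card_lt_card
  constructor
  · exact filter_subset _ _
  · intro hsub
    have := hsub ha
    simp at this

lemma rk_le_card {n : ℕ} (S : Finset (Fin n)) (a : Fin n) : rk S a ≤ S.card :=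
  Finset.card_le_card (filter_subset _ _)

lemma lt_of_rk_lt {n : ℕ} {S : Finset (Fin n)} {a b : Fin n}
    (hb : b ∈ S) (h : rk S a < rk S b) : a < b := by
  by_contra hab
  push_neg at hab
  exact absurd (rk_mono S hab) (by omega)

lemma rk_injOn {n : ℕ} {S : Finset (Fin n)} {a b : Fin n} (ha : a ∈ S) (hb : b ∈ S)
    (h : rk S a = rk S b) : a = b := by
  rcases lt_trichotomy a b with hl | he | hl
  · exact absurd (rk_lt_rk ha hl) (by omega)
  · exact he
  · exact absurd (rk_lt_rk hb hl) (by omega)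

lemma exists_rk {n : ℕ} {S : Finset (Fin n)} {j : ℕ} (hj : j < S.card) :
    ∃ s ∈ S, rk S s = j := by
  have hsurj := Finset.surj_on_of_inj_on_of_card_le
    (s := S) (t := Finset.range S.card) (f := fun s _ => rk S s)
    (fun a ha => by simp [rk_lt_card ha])
    (fun a b ha hb hab => rk_injOn ha hb hab)
    (by simp)
  obtain ⟨s, hs, hrk⟩ := hsurj j (by simpa using hj)
  exact ⟨s, hs, hrk.symm⟩

lemma card_rk_lt {n : ℕ} (S : Finset (Fin n)) {c : ℕ} (hc : c ≤ S.card) :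
    (S.filter (fun s => rk S s < c)).card = c := by
  rw [← Finset.card_range c]
  apply Finset.card_bij (fun s _ => rk S s)
  · intro a ha; simp only [mem_filter] at ha; simpa using ha.2
  · intro a ha b hb hab
    simp only [mem_filter] at ha hb
    exact rk_injOn ha.1 hb.1 hab
  · intro j hj
    simp only [Finset.mem_range] at hj
    obtain ⟨s, hs, hrk⟩ := exists_rk (lt_of_lt_of_le hj hc)
    exact ⟨s, by simp [mem_filter, hs, hrk, hj], hrk⟩

lemma sum_rk_Ioo {n : ℕ} (S : Finset (Fin n)) (F : ℕ → ℕ) {c : ℕ} (hc : c ≤ S.card) :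
    ∑ s ∈ S.filter (fun s => rk S s ∈ Finset.Ioo 0 c), F (rk S s)
      = ∑ j ∈ Finset.Ioo 0 c, F j := by
  apply Finset.sum_bij (fun s _ => rk S s)
  · intro a ha; simp only [mem_filter] at ha; exact ha.2
  · intro a ha b hb hab
    simp only [mem_filter] at ha hb
    exact rk_injOn ha.1 hb.1 hab
  · intro j hj
    simp only [Finset.mem_Ioo] at hj
    obtain ⟨s, hs, hrk⟩ := exists_rk (lt_of_lt_of_le hj.2 hc)
    exact ⟨s, by simp [mem_filter, hs, hrk, hj.1, hj.2], hrk⟩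
  · intro a ha; rfl

lemma telescope (g : ℕ → ℕ) {μ c : ℕ} (hc1 : 1 ≤ c) (hcμ : c ≤ μ) :
    (∑ j ∈ Finset.Ioo 0 c, g (μ - j + 1)) + g (μ - c + 1)
      = (∑ j ∈ Finset.Ioo 0 c, g (μ - j)) + g μ := by
  induction c with
  | zero => omega
  | succ c ih =>
    rcases Nat.eq_or_lt_of_le hc1 with h1 | h1
    · have e0 : μ - 1 + 1 = μ := by omega
      simp [← h1, e0, show Finset.Ioo 0 1 = ∅ from rfl]
    · have hc : 1 ≤ c := by omega
      have : Finset.Ioo 0 (c+1) = insert c (Finset.Ioo 0 c) := by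
        ext j; simp [Finset.mem_Ioo]; omega
      rw [this, Finset.sum_insert (by simp), Finset.sum_insert (by simp)]
      have ih' := ih hc (by omega)
      rw [show μ - (c+1) + 1 = μ - c from by omega]
      omega

lemma exch {g : ℕ → ℕ} (hg : Monotone g) {w w' : ℕ} (hww : w ≤ w') {a L : ℕ}
    (ha : a ≤ L) : g w' * a + g w * L ≤ g w * a + g w' * L := by
  obtain ⟨e, he⟩ : ∃ e, g w' = g w + e := ⟨g w' - g w, by have := hg hww; omega⟩
  obtain ⟨f, hf⟩ : ∃ f, L = a + f := ⟨L - a, by omega⟩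
  subst hf
  rw [he]
  nlinarith

lemma rk_insert_lt {n : ℕ} {S : Finset (Fin n)} {a s : Fin n} (has : a < s) (haS : a ∉ S) :
    rk (insert a S) s = rk S s + 1 := by
  unfold rk
  rw [Finset.filter_insert, if_pos has,
    Finset.card_insert_of_notMem (fun h => haS (Finset.mem_of_mem_filter _ h))]

lemma rk_insert_not_lt {n : ℕ} {S : Finset (Fin n)} {a s : Fin n} (has : ¬ a < s) :
    rk (insert a S) s = rk S s := by
  unfold rk
  rw [Finset.filter_insert, if_neg has]

lemma rk_erase_lt {n : ℕ} {S : Finset (Fin n)} {a s : Fin n} (haS : a ∈ S) (has : a < s) :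
    rk (S.erase a) s = rk S s - 1 := by
  unfold rk
  rw [Finset.filter_erase, Finset.card_erase_of_mem (by simp [haS, has])]

lemma rk_union {n : ℕ} {S₁ S₂ : Finset (Fin n)} (hd : Disjoint S₁ S₂) (s : Fin n) :
    rk (S₁ ∪ S₂) s = rk S₁ s + rk S₂ s := by
  unfold rk
  rw [Finset.filter_union,
    Finset.card_union_of_disjoint (Finset.disjoint_filter_filter hd)]

lemma rk_filter_ge {n : ℕ} (S : Finset (Fin n)) (c : ℕ) {s : Fin n} (hs : s ∈ S)
    (hc : c ≤ rk S s) : rk (S.filter (fun w => c ≤ rk S w)) s = rk S s - c := by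
  have hsplit : ((S.filter (· < s)).filter (fun w => rk S w < c))
      = S.filter (fun w => rk S w < c) := by
    ext w
    simp only [mem_filter]
    constructor
    · rintro ⟨⟨h1, _⟩, h3⟩; exact ⟨h1, h3⟩
    · rintro ⟨h1, h3⟩
      exact ⟨⟨h1, lt_of_rk_lt hs (lt_of_lt_of_le h3 hc)⟩, h3⟩
  have hsplit2 : ((S.filter (· < s)).filter (fun w => ¬ rk S w < c))
      = (S.filter (fun w => c ≤ rk S w)).filter (· < s) := by
    ext w
    simp only [mem_filter, not_lt]
    tauto
  have hcards := Finset.card_filter_add_card_filter_not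
    (s := S.filter (· < s)) (p := fun w => rk S w < c)
  rw [hsplit, hsplit2] at hcards
  have h1 : (S.filter (fun w => rk S w < c)).card = c :=
    card_rk_lt S (le_trans hc (rk_le_card S s))
  show (((S.filter (fun w => c ≤ rk S w))).filter (· < s)).card = (S.filter (· < s)).card - c
  omega

lemma rk_filter_lt {n : ℕ} (S : Finset (Fin n)) (c : ℕ) {s : Fin n}
    (hc : rk S s ≤ c) : rk (S.filter (fun w => rk S w < c)) s = rk S s := by
  unfold rk
  congr 1
  rw [Finset.filter_filter]
  ext w
  simp only [mem_filter]
  constructor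
  · rintro ⟨h1, _, h2⟩; exact ⟨h1, h2⟩
  · rintro ⟨h1, h2⟩
    exact ⟨h1, lt_of_lt_of_le (rk_lt_rk h1 h2) hc, h2⟩

lemma vspaCost_eq {n k : ℕ} (g : ℕ → ℕ) (m : Fin k → ℕ) (T : Fin n → ℕ)
    (x : Fin n → Fin k) :
    vspaCost g m T x = ∑ r : Fin k, agCost g T (m r) (fib x r) := by
  unfold vspaCost agCost
  rw [← Finset.sum_fiberwise (s := Finset.univ) (g := x)
        (f := fun t => g (remCap m x t (x t)) * T t)]
  apply Finset.sum_congr rfl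
  intro r _
  apply Finset.sum_congr
  · rfl
  · intro t ht
    have hxt : x t = r := by
      simp only [fib, mem_filter] at ht; exact ht.2
    rw [hxt]
    have he : (Finset.univ.filter (fun s : Fin n => s < t ∧ x s = r))
        = ((fib x r).filter (· < t)) := by
      unfold fib
      rw [Finset.filter_filter]
      ext s
      simp [and_comm]
    unfold remCap rk
    rw [he]
lemma main_aux {n k : ℕ} (g : ℕ → ℕ) (m : Fin k → ℕ) (T : Fin n → ℕ)
    (x : Fin n → Fin k) (hx : vspaValid m x) (a1 γ : Fin k) (hne : γ ≠ a1)
    (A B : Finset (Fin n))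
    (hU : A ∪ B = fib x a1 ∪ fib x γ) (hdis : Disjoint A B)
    (hcA : A.card = m a1) (hcB : B.card = m γ)
    (z : Fin n) (hz : z ∈ A)
    (hcost : agCost g T (m a1) A + agCost g T (m γ) B ≤
      agCost g T (m a1) (fib x a1) + agCost g T (m γ) (fib x γ)) :
    ∃ xstar : Fin n → Fin k, vspaValid m xstar ∧ xstar z = a1 ∧
      vspaCost g m T xstar ≤ vspaCost g m T x := by
  classical
  set y : Fin n → Fin k := fun s => if s ∈ A then a1 else if s ∈ B then γ else x s with hy
  have hAB : ∀ s, s ∈ A ∪ B ↔ (x s = a1 ∨ x s = γ) := by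
    intro s
    rw [hU]
    simp [fib, mem_union, mem_filter]
  have hf1 : fib y a1 = A := by
    ext s
    simp only [fib, mem_filter, mem_univ, true_and, hy]
    by_cases hA : s ∈ A
    · simp [hA]
    · by_cases hB : s ∈ B
      · simp [hA, hB, hne]
      · simp only [hA, hB, if_false]
        constructor
        · intro hxs
          exact absurd ((hAB s).mpr (Or.inl hxs)) (by simp [hA, hB])
        · intro h; exact h.elim
  have hfγ : fib y γ = B := by
    ext s
    simp only [fib, mem_filter, mem_univ, true_and, hy]
    by_cases hA : s ∈ A
    · have : s ∉ B := Finset.disjoint_left.mp hdis hA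
      simp [hA, hne.symm, this]
    · by_cases hB : s ∈ B
      · simp [hA, hB]
      · simp only [hA, hB, if_false]
        constructor
        · intro hxs
          exact absurd ((hAB s).mpr (Or.inr hxs)) (by simp [hA, hB])
        · intro h; exact h.elim
  have hfr : ∀ r, r ≠ a1 → r ≠ γ → fib y r = fib x r := by
    intro r hr1 hrγ
    ext s
    simp only [fib, mem_filter, mem_univ, true_and, hy]
    by_cases hA : s ∈ A
    · have hx' := (hAB s).mp (mem_union_left _ hA)
      simp [hA, hr1.symm]
      rcases hx' with h | h <;> rw [h]
      · exact fun hh => absurd hh.symm hr1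
      · exact fun hh => absurd hh.symm hrγ
    · by_cases hB : s ∈ B
      · have hx' := (hAB s).mp (mem_union_right _ hB)
        simp [hA, hB, hrγ.symm]
        rcases hx' with h | h <;> rw [h]
        · exact fun hh => absurd hh.symm hr1
        · exact fun hh => absurd hh.symm hrγ
      · simp [hA, hB]
  refine ⟨y, ?_, by simp [hy, hz], ?_⟩
  · intro r
    by_cases hr1 : r = a1
    · subst hr1
      rw [show (Finset.univ.filter fun t => y t = r) = fib y r from rfl, hf1, hcA]
    · by_cases hrγ : r = γ
      · subst hrγ
        rw [show (Finset.univ.filter fun t => y t = r) = fib y r from rfl, hfγ, hcB]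
      · rw [show (Finset.univ.filter fun t => y t = r) = fib y r from rfl,
          hfr r hr1 hrγ]
        exact hx r
  · rw [vspaCost_eq, vspaCost_eq]
    have hγmem : γ ∈ Finset.univ.erase a1 := by simp [hne]
    have expand : ∀ F : Fin k → ℕ, ∑ r, F r
        = F a1 + (F γ + ∑ r ∈ (Finset.univ.erase a1).erase γ, F r) := by
      intro F
      rw [← Finset.add_sum_erase _ F (mem_univ a1), ← Finset.add_sum_erase _ F hγmem]
    rw [expand, expand]
    have htail : ∑ r ∈ (Finset.univ.erase a1).erase γ, agCost g T (m r) (fib y r)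
        = ∑ r ∈ (Finset.univ.erase a1).erase γ, agCost g T (m r) (fib x r) := by
      apply Finset.sum_congr rfl
      intro r hr
      simp only [Finset.mem_erase] at hr
      rw [hfr r hr.2.1 hr.1]
    rw [htail, hf1, hfγ]
    omega

set_option maxHeartbeats 2000000 in
/-- If the first task is an `L` (the larger value), it is optimal to assign it
to agent `1` (the smallest agent): any decision sequence starting with an agent
`γ > 1` is dominated by one starting with agent `1`. -/
theorem first_L_to_smallest_agent (k : ℕ) (hk : 0 < k) (m : Fin k → ℕ)
    (hmpos : ∀ r, 0 < m r) (hmono : Monotone m)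
    (hn : 0 < ∑ r : Fin k, m r)
    (g : ℕ → ℕ) (hg : Monotone g)
    (T : Fin (∑ r : Fin k, m r) → ℕ) (H L : ℕ) (hHL : H < L)
    (hbin : ∀ t, T t = H ∨ T t = L)
    (hT1 : T ⟨0, hn⟩ = L)
    (x : Fin (∑ r : Fin k, m r) → Fin k) (hx : vspaValid m x)
    (hx1 : x ⟨0, hn⟩ ≠ ⟨0, hk⟩) :
    ∃ xstar : Fin (∑ r : Fin k, m r) → Fin k,
      vspaValid m xstar ∧ xstar ⟨0, hn⟩ = ⟨0, hk⟩ ∧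
      vspaCost g m T xstar ≤ vspaCost g m T x := by
  classical
  have hTle : ∀ s, T s ≤ L := fun s => by rcases hbin s with h | h <;> omega
  set z : Fin (∑ r : Fin k, m r) := ⟨0, hn⟩ with hzdef
  set a1 : Fin k := ⟨0, hk⟩ with ha1def
  set γ : Fin k := x z with hγdef
  have hne : γ ≠ a1 := hx1
  have ha1γ : a1 ≤ γ := by simp [ha1def, Fin.le_def]
  have hμ : m a1 ≤ m γ := hmono ha1γ
  set G1 : Finset (Fin (∑ r : Fin k, m r)) := fib x a1 with hG1def
  set Gg : Finset (Fin (∑ r : Fin k, m r)) := fib x γ with hGgdef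
  have hcG1 : G1.card = m a1 := hx a1
  have hcGg : Gg.card = m γ := hx γ
  have hμ1pos : 0 < m a1 := hmpos a1
  have hG1ne : G1.Nonempty := by rw [← Finset.card_pos, hcG1]; exact hμ1pos
  set u : Fin (∑ r : Fin k, m r) := G1.min' hG1ne with hudef
  have huG1 : u ∈ G1 := G1.min'_mem hG1ne
  have humin : ∀ s ∈ G1, u ≤ s := fun s hs => G1.min'_le s hs
  have hxu : x u = a1 := by
    have h := huG1
    rw [hG1def] at h
    simp only [fib, mem_filter] at h
    exact h.2
  have hzGg : z ∈ Gg := by rw [hGgdef]; simp [fib, hγdef]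
  have hzle : ∀ s, z ≤ s := fun s => by simp [hzdef, Fin.le_def]
  have hzG1 : z ∉ G1 := by
    rw [hG1def]
    simp only [fib, mem_filter, mem_univ, true_and]
    rw [← hγdef]
    exact hne
  have huGg : u ∉ Gg := by
    rw [hGgdef]
    simp only [fib, mem_filter, mem_univ, true_and, hxu]
    exact fun h => hne h.symm
  have hzu : z < u := by
    refine lt_of_le_of_ne (hzle u) ?_
    intro h
    apply hne
    rw [hγdef, h, hxu]
  have hdisj : Disjoint G1 Gg := by
    rw [Finset.disjoint_left]
    intro s h1 h2
    rw [hG1def] at h1; rw [hGgdef] at h2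
    simp only [fib, mem_filter, mem_univ, true_and] at h1 h2
    rw [h1] at h2
    exact hne h2.symm
  have hrkz : ∀ S : Finset (Fin (∑ r : Fin k, m r)), rk S z = 0 := by
    intro S
    unfold rk
    rw [Finset.card_eq_zero, Finset.filter_eq_empty_iff]
    intro s _
    exact fun h => absurd (hzle s) (not_le.mpr h)
  set t : ℕ := rk Gg u with htdef
  have ht1 : 1 ≤ t := by
    have h := rk_lt_rk hzGg hzu
    rw [hrkz] at h
    omega
  have htμ : t ≤ m γ := by rw [← hcGg]; exact rk_le_card Gg u
  have hlt_of_rk : ∀ s : Fin (∑ r : Fin k, m r), rk Gg s < t → s < u := by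
    intro s h
    by_contra hnot
    push_neg at hnot
    exact absurd (rk_mono Gg hnot) (by omega)
  have hltiff : ∀ s ∈ Gg, (s < u ↔ rk Gg s < t) := by
    intro s hs
    exact ⟨fun h => rk_lt_rk hs h, hlt_of_rk s⟩
  have hrkpos : ∀ s ∈ Gg, s ≠ z → 0 < rk Gg s := by
    intro s hs hsz
    have h := rk_lt_rk hzGg (lt_of_le_of_ne (hzle s) (Ne.symm hsz))
    rw [hrkz] at h
    exact h
  have hrk_lt : ∀ s ∈ Gg, rk Gg s < m γ := fun s hs => hcGg ▸ rk_lt_card hs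
  by_cases hcase : t ≤ (m γ - m a1) + 1
  · -- Case A: swap task z (agent γ) with task u (agent 1's first task)
    set E : Finset (Fin (∑ r : Fin k, m r)) := G1.erase u with hEdef
    set D : Finset (Fin (∑ r : Fin k, m r)) := Gg.erase z with hDdef
    set A : Finset (Fin (∑ r : Fin k, m r)) := insert z E with hAdef
    set B : Finset (Fin (∑ r : Fin k, m r)) := insert u D with hBdef
    have hzE : z ∉ E := fun h => hzG1 (Finset.mem_of_mem_erase h)
    have huD : u ∉ D := fun h => huGg (Finset.mem_of_mem_erase h)
    have hU : A ∪ B = G1 ∪ Gg := by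
      rw [hAdef, hBdef, hEdef, hDdef]
      ext s
      simp only [mem_union, mem_insert, mem_erase]
      constructor
      · rintro ((h | ⟨_, h⟩) | (h | ⟨_, h⟩))
        · right; rw [h]; exact hzGg
        · left; exact h
        · left; rw [h]; exact huG1
        · right; exact h
      · intro h
        by_cases h1 : s = z
        · left; left; exact h1
        · by_cases h2 : s = u
          · right; left; exact h2
          · rcases h with h | h
            · left; right; exact ⟨h2, h⟩
            · right; right; exact ⟨h1, h⟩
    have hdis : Disjoint A B := by
      rw [Finset.disjoint_left]
      intro s hs hs'
      rw [hAdef, mem_insert] at hs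
      rw [hBdef, mem_insert] at hs'
      rcases hs with h | h
      · rcases hs' with h' | h'
        · rw [h] at h'; exact absurd h' (ne_of_lt hzu)
        · rw [h, hDdef] at h'; exact absurd h' (Finset.notMem_erase z Gg)
      · have hsG1 : s ∈ G1 := Finset.mem_of_mem_erase (hEdef ▸ h)
        rcases hs' with h' | h'
        · rw [hEdef, mem_erase] at h; exact h.1 h'
        · exact absurd (Finset.mem_of_mem_erase (hDdef ▸ h'))
            (Finset.disjoint_left.mp hdisj hsG1)
    have hcA : A.card = m a1 := by
      rw [hAdef, Finset.card_insert_of_notMem hzE, hEdef,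
        Finset.card_erase_of_mem huG1, hcG1]
      omega
    have hcB : B.card = m γ := by
      rw [hBdef, Finset.card_insert_of_notMem huD, hDdef,
        Finset.card_erase_of_mem hzGg, hcGg]
      omega
    -- rank computations
    have hrkA : ∀ s ∈ E, rk A s = rk G1 s := by
      intro s hs
      have hsG1 : s ∈ G1 := Finset.mem_of_mem_erase hs
      have hsu : s ≠ u := (Finset.mem_erase.mp hs).1
      have hus : u < s := lt_of_le_of_ne (humin s hsG1) (Ne.symm hsu)
      have hzs : z < s := lt_trans hzu hus
      have h1 : 0 < rk G1 s := lt_of_le_of_lt (Nat.zero_le _) (rk_lt_rk huG1 hus)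
      rw [hAdef, rk_insert_lt hzs hzE, hEdef, rk_erase_lt huG1 hus]
      omega
    have hrkG1u : rk G1 u = 0 := by
      unfold rk
      rw [Finset.card_eq_zero, Finset.filter_eq_empty_iff]
      intro s hs
      exact fun h => absurd (humin s hs) (not_le.mpr h)
    have hrkBu : rk B u = t - 1 := by
      rw [hBdef, rk_insert_not_lt (lt_irrefl u), hDdef, rk_erase_lt hzGg hzu, htdef]
    have hrkBlt : ∀ s ∈ D, rk Gg s < t → rk B s = rk Gg s - 1 := by
      intro s hs hlt
      have hsu : s < u := hlt_of_rk s hlt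
      have hsz : s ≠ z := (Finset.mem_erase.mp hs).1
      have hzs : z < s := lt_of_le_of_ne (hzle s) (Ne.symm hsz)
      rw [hBdef, rk_insert_not_lt (not_lt.mpr (le_of_lt hsu)), hDdef,
        rk_erase_lt hzGg hzs]
    have hrkBge : ∀ s ∈ D, t ≤ rk Gg s → rk B s = rk Gg s := by
      intro s hs hge
      have hsGg : s ∈ Gg := Finset.mem_of_mem_erase hs
      have hsz : s ≠ z := (Finset.mem_erase.mp hs).1
      have hzs : z < s := lt_of_le_of_ne (hzle s) (Ne.symm hsz)
      have hns : ¬ s < u := by rw [hltiff s hsGg]; omega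
      have hus : u < s := lt_of_le_of_ne (not_lt.mp hns)
        (fun h => huGg (h ▸ hsGg))
      have hpos : 0 < rk Gg s := hrkpos s hsGg hsz
      rw [hBdef, rk_insert_lt hus huD, hDdef, rk_erase_lt hzGg hzs]
      omega
    -- the middle set
    set W : Finset (Fin (∑ r : Fin k, m r)) :=
      Gg.filter (fun s => rk Gg s ∈ Finset.Ioo 0 t) with hWdef
    have hWD : D.filter (fun s => rk Gg s < t) = W := by
      ext s
      constructor
      · intro h
        rw [Finset.mem_filter] at h
        have h2 := h.2
        have h1 := h.1
        rw [hDdef, Finset.mem_erase] at h1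
        rw [hWdef, Finset.mem_filter, Finset.mem_Ioo]
        exact ⟨h1.2, hrkpos s h1.2 h1.1, h2⟩
      · intro h
        rw [hWdef, Finset.mem_filter, Finset.mem_Ioo] at h
        rw [Finset.mem_filter, hDdef, Finset.mem_erase]
        refine ⟨⟨?_, h.1⟩, h.2.2⟩
        intro heq
        rw [heq, hrkz] at h
        exact absurd h.2.1 (lt_irrefl 0)
    -- agent-1 side equation
    have hEqA : agCost g T (m a1) A + g (m a1) * T u
        = agCost g T (m a1) G1 + g (m a1) * L := by
      have hA : agCost g T (m a1) A
          = g (m a1) * L + ∑ s ∈ E, g (m a1 - rk G1 s) * T s := by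
        unfold agCost
        have hs1 : ∑ s ∈ E, g (m a1 - rk A s) * T s
            = ∑ s ∈ E, g (m a1 - rk G1 s) * T s :=
          Finset.sum_congr rfl (fun s hs => by rw [hrkA s hs])
        rw [hAdef, Finset.sum_insert hzE, ← hAdef, hrkz, Nat.sub_zero, hT1, hs1]
      have hG1' : agCost g T (m a1) G1
          = g (m a1) * T u + ∑ s ∈ E, g (m a1 - rk G1 s) * T s := by
        unfold agCost
        rw [← Finset.add_sum_erase G1 _ huG1, hrkG1u, Nat.sub_zero, ← hEdef]
      rw [hA, hG1']
      ring
    -- agent-γ side sums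
    have hsumB : agCost g T (m γ) B
        = g (m γ - t + 1) * T u
          + ((∑ s ∈ W, g (m γ - rk Gg s + 1) * T s)
            + (∑ s ∈ D.filter (fun s => ¬ rk Gg s < t), g (m γ - rk Gg s) * T s)) := by
      unfold agCost
      have h1 : ∑ s ∈ D.filter (fun s => rk Gg s < t), g (m γ - rk B s) * T s
          = ∑ s ∈ W, g (m γ - rk Gg s + 1) * T s := by
        rw [← hWD]
        apply Finset.sum_congr rfl
        intro s hs
        rw [Finset.mem_filter] at hs
        have hsGg : s ∈ Gg := Finset.mem_of_mem_erase hs.1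
        have hpos : 0 < rk Gg s := hrkpos s hsGg (Finset.mem_erase.mp hs.1).1
        have hlt : rk Gg s < m γ := hrk_lt s hsGg
        rw [hrkBlt s hs.1 hs.2]
        rw [show m γ - (rk Gg s - 1) = m γ - rk Gg s + 1 from by omega]
      have h2 : ∑ s ∈ D.filter (fun s => ¬ rk Gg s < t), g (m γ - rk B s) * T s
          = ∑ s ∈ D.filter (fun s => ¬ rk Gg s < t), g (m γ - rk Gg s) * T s := by
        apply Finset.sum_congr rfl
        intro s hs
        rw [Finset.mem_filter] at hs
        rw [hrkBge s hs.1 (not_lt.mp hs.2)]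
      have h3 : ∑ s ∈ D, g (m γ - rk B s) * T s
          = (∑ s ∈ W, g (m γ - rk Gg s + 1) * T s)
            + (∑ s ∈ D.filter (fun s => ¬ rk Gg s < t), g (m γ - rk Gg s) * T s) := by
        rw [← Finset.sum_filter_add_sum_filter_not D (fun s => rk Gg s < t)
          (fun s => g (m γ - rk B s) * T s), h1, h2]
      rw [hBdef, Finset.sum_insert huD, ← hBdef, hrkBu,
        show m γ - (t - 1) = m γ - t + 1 from by omega, h3]
    have hsumGg : agCost g T (m γ) Gg
        = g (m γ) * L
          + ((∑ s ∈ W, g (m γ - rk Gg s) * T s)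
            + (∑ s ∈ D.filter (fun s => ¬ rk Gg s < t), g (m γ - rk Gg s) * T s)) := by
      unfold agCost
      rw [← Finset.add_sum_erase Gg _ hzGg, hrkz, Nat.sub_zero, hT1, ← hDdef,
        ← Finset.sum_filter_add_sum_filter_not D (fun s => rk Gg s < t)
          (fun s => g (m γ - rk Gg s) * T s), hWD]
    -- inequalities
    have hI1 : (∑ s ∈ W, g (m γ - rk Gg s + 1) * T s)
          + (∑ s ∈ W, g (m γ - rk Gg s) * L)
        ≤ (∑ s ∈ W, g (m γ - rk Gg s) * T s)
          + (∑ s ∈ W, g (m γ - rk Gg s + 1) * L) := by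
      rw [← Finset.sum_add_distrib, ← Finset.sum_add_distrib]
      apply Finset.sum_le_sum
      intro s _
      exact exch hg (Nat.le_succ _) (hTle s)
    have hE2 : (∑ s ∈ W, g (m γ - rk Gg s + 1) * L) + g (m γ - t + 1) * L
        = (∑ s ∈ W, g (m γ - rk Gg s) * L) + g (m γ) * L := by
      have e1 : ∑ s ∈ W, g (m γ - rk Gg s + 1) * L
          = ∑ j ∈ Finset.Ioo 0 t, g (m γ - j + 1) * L := by
        rw [hWdef]
        exact sum_rk_Ioo Gg (fun j => g (m γ - j + 1) * L) (by rw [hcGg]; exact htμ)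
      have e2 : ∑ s ∈ W, g (m γ - rk Gg s) * L
          = ∑ j ∈ Finset.Ioo 0 t, g (m γ - j) * L := by
        rw [hWdef]
        exact sum_rk_Ioo Gg (fun j => g (m γ - j) * L) (by rw [hcGg]; exact htμ)
      rw [e1, e2, ← Finset.sum_mul, ← Finset.sum_mul, ← add_mul, ← add_mul,
        telescope g ht1 htμ]
    have hI2 : g (m γ - t + 1) * T u + g (m a1) * L
        ≤ g (m a1) * T u + g (m γ - t + 1) * L :=
      exch hg (by omega) (hTle u)
    have hcost : agCost g T (m a1) A + agCost g T (m γ) B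
        ≤ agCost g T (m a1) G1 + agCost g T (m γ) Gg := by
      rw [hsumB, hsumGg]
      omega
    obtain ⟨xs, h1, h2, h3⟩ := main_aux g m T x hx a1 γ hne A B hU hdis hcA hcB z
      (by rw [hAdef]; exact Finset.mem_insert_self z E) hcost
    exact ⟨xs, h1, h2, h3⟩
  · -- Case B: agent γ's capacity already dropped below m a1 before u
    push_neg at hcase
    set d : ℕ := m γ - m a1 with hddef
    have hd2 : d + 2 ≤ t := hcase
    have hd1 : d + 1 < m γ := by omega
    set Lo : Finset (Fin (∑ r : Fin k, m r)) :=
      Gg.filter (fun s => rk Gg s ∈ Finset.Ioo 0 (d+1)) with hLodef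
    set Hi : Finset (Fin (∑ r : Fin k, m r)) :=
      Gg.filter (fun s => d + 1 ≤ rk Gg s) with hHidef
    set A : Finset (Fin (∑ r : Fin k, m r)) := insert z Hi with hAdef
    set B : Finset (Fin (∑ r : Fin k, m r)) := Lo ∪ G1 with hBdef
    have hzHi : z ∉ Hi := by
      rw [hHidef, Finset.mem_filter, hrkz]
      rintro ⟨-, h⟩
      omega
    have hzLo : z ∉ Lo := by
      rw [hLodef, Finset.mem_filter, hrkz, Finset.mem_Ioo]
      rintro ⟨-, h, -⟩
      exact absurd h (lt_irrefl 0)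
    have hLoGg : Lo ⊆ Gg := by rw [hLodef]; exact Finset.filter_subset _ _
    have hHiGg : Hi ⊆ Gg := by rw [hHidef]; exact Finset.filter_subset _ _
    have hLoF : Lo = (Gg.filter (fun s => rk Gg s < d+1)).erase z := by
      rw [hLodef]
      ext s
      simp only [Finset.mem_filter, Finset.mem_erase, Finset.mem_Ioo]
      constructor
      · rintro ⟨hs, h0, hd'⟩
        refine ⟨?_, hs, hd'⟩
        intro heq
        rw [heq, hrkz] at h0
        exact absurd h0 (lt_irrefl 0)
      · rintro ⟨hne', hs, hd'⟩
        exact ⟨hs, hrkpos s hs hne', hd'⟩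
    have hcHi : Hi.card = m γ - (d + 1) := by
      have hcards := Finset.card_filter_add_card_filter_not
        (s := Gg) (p := fun s => rk Gg s < d + 1)
      have h2 : (Gg.filter (fun s => rk Gg s < d+1)).card = d+1 :=
        card_rk_lt Gg (by rw [hcGg]; omega)
      have heq : Hi = Gg.filter (fun s => ¬ rk Gg s < d + 1) := by
        rw [hHidef]
        apply Finset.filter_congr
        intro s _
        simp only [not_lt]
      rw [heq]
      omega
    have hcLo : Lo.card = d := by
      rw [hLoF, Finset.card_erase_of_mem
        (by rw [Finset.mem_filter, hrkz]; exact ⟨hzGg, by omega⟩),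
        card_rk_lt Gg (by rw [hcGg]; omega)]
      omega
    have hcA : A.card = m a1 := by
      rw [hAdef, Finset.card_insert_of_notMem hzHi, hcHi]
      omega
    have hdisLoG1 : Disjoint Lo G1 := (hdisj.symm).mono_left hLoGg
    have hcB : B.card = m γ := by
      rw [hBdef, Finset.card_union_of_disjoint hdisLoG1, hcLo, hcG1]
      omega
    have hU : A ∪ B = G1 ∪ Gg := by
      ext s
      rw [hAdef, hBdef]
      simp only [Finset.mem_union, Finset.mem_insert]
      constructor
      · rintro ((h | h) | (h | h))
        · right; rw [h]; exact hzGg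
        · right; exact hHiGg h
        · right; exact hLoGg h
        · left; exact h
      · intro h
        rcases h with h | h
        · right; right; exact h
        · by_cases h0 : rk Gg s = 0
          · left; left
            exact rk_injOn h hzGg (by rw [h0, hrkz])
          · by_cases hlo : rk Gg s < d + 1
            · right; left
              rw [hLodef, Finset.mem_filter, Finset.mem_Ioo]
              exact ⟨h, by omega, hlo⟩
            · left; right
              rw [hHidef, Finset.mem_filter]
              exact ⟨h, by omega⟩
    have hdis : Disjoint A B := by
      rw [Finset.disjoint_left]
      intro s hs hs'
      rw [hAdef, Finset.mem_insert] at hs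
      rw [hBdef, Finset.mem_union] at hs'
      rcases hs with h | h
      · rcases hs' with h' | h'
        · rw [h] at h'; exact hzLo h'
        · rw [h] at h'; exact hzG1 h'
      · rcases hs' with h' | h'
        · rw [hHidef, Finset.mem_filter] at h
          rw [hLodef, Finset.mem_filter, Finset.mem_Ioo] at h'
          omega
        · exact Finset.disjoint_left.mp hdisj h' (hHiGg h)
    -- rank computations
    have hrkA : ∀ s ∈ Hi, rk A s = rk Gg s - d := by
      intro s hs
      have hs' := hs
      rw [hHidef, Finset.mem_filter] at hs'
      have hsz : s ≠ z := by
        intro heq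
        rw [heq, hrkz] at hs'
        omega
      have hzs : z < s := lt_of_le_of_ne (hzle s) (Ne.symm hsz)
      rw [hAdef, rk_insert_lt hzs hzHi, hHidef, rk_filter_ge Gg (d+1) hs'.1 hs'.2]
      omega
    have hrkBLo : ∀ w ∈ Lo, rk B w = rk Gg w - 1 := by
      intro w hw
      have hw' := hw
      rw [hLodef, Finset.mem_filter, Finset.mem_Ioo] at hw'
      have hwz : w ≠ z := by
        intro heq
        rw [heq, hrkz] at hw'
        exact absurd hw'.2.1 (lt_irrefl 0)
      have hzw : z < w := lt_of_le_of_ne (hzle w) (Ne.symm hwz)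
      have hwu : w < u := hlt_of_rk w (by omega)
      have hrkG1w : rk G1 w = 0 := by
        unfold rk
        rw [Finset.card_eq_zero, Finset.filter_eq_empty_iff]
        intro v hv
        exact fun h => absurd (lt_of_lt_of_le hwu (humin v hv)) (asymm h)
      rw [hBdef, rk_union hdisLoG1, hrkG1w, Nat.add_zero, hLoF,
        rk_erase_lt (by rw [Finset.mem_filter, hrkz]; exact ⟨hzGg, by omega⟩) hzw,
        rk_filter_lt Gg (d+1) (le_of_lt hw'.2.2)]
    have hrkBG1 : ∀ v ∈ G1, rk B v = d + rk G1 v := by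
      intro v hv
      have hLofull : Lo.filter (· < v) = Lo := by
        apply Finset.filter_true_of_mem
        intro w hw
        have hw' := hw
        rw [hLodef, Finset.mem_filter, Finset.mem_Ioo] at hw'
        exact lt_of_lt_of_le (hlt_of_rk w (by omega)) (humin v hv)
      have hrkLov : rk Lo v = d := by
        unfold rk
        rw [hLofull, hcLo]
      rw [hBdef, rk_union hdisLoG1, hrkLov]
    -- agent-1 side
    have hA_eq : agCost g T (m a1) A
        = g (m a1) * L + ∑ s ∈ Hi, g (m γ - rk Gg s) * T s := by
      unfold agCost
      have hs1 : ∑ s ∈ Hi, g (m a1 - rk A s) * T s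
          = ∑ s ∈ Hi, g (m γ - rk Gg s) * T s := by
        apply Finset.sum_congr rfl
        intro s hs
        have hs' := hs
        rw [hHidef, Finset.mem_filter] at hs'
        rw [hrkA s hs, show m a1 - (rk Gg s - d) = m γ - rk Gg s from by
          have := hs'.2; omega]
      rw [hAdef, Finset.sum_insert hzHi, ← hAdef, hrkz, Nat.sub_zero, hT1, hs1]
    have hB_eq : agCost g T (m γ) B
        = (∑ w ∈ Lo, g (m γ - rk Gg w + 1) * T w) + agCost g T (m a1) G1 := by
      unfold agCost
      have h1 : ∑ w ∈ Lo, g (m γ - rk B w) * T w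
          = ∑ w ∈ Lo, g (m γ - rk Gg w + 1) * T w := by
        apply Finset.sum_congr rfl
        intro w hw
        have hw' := hw
        rw [hLodef, Finset.mem_filter, Finset.mem_Ioo] at hw'
        have hlt : rk Gg w < m γ := hrk_lt w hw'.1
        rw [hrkBLo w hw, show m γ - (rk Gg w - 1) = m γ - rk Gg w + 1 from by
          have := hw'.2.1; omega]
      have h2 : ∑ v ∈ G1, g (m γ - rk B v) * T v
          = ∑ v ∈ G1, g (m a1 - rk G1 v) * T v := by
        apply Finset.sum_congr rfl
        intro v hv
        rw [hrkBG1 v hv, show m γ - (d + rk G1 v) = m a1 - rk G1 v from by omega]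
      rw [hBdef, Finset.sum_union hdisLoG1, ← hBdef, h1, h2]
    have hGgsplit : Gg.erase z = Lo ∪ Hi := by
      ext s
      rw [Finset.mem_erase, Finset.mem_union, hLodef, hHidef,
        Finset.mem_filter, Finset.mem_filter, Finset.mem_Ioo]
      constructor
      · rintro ⟨hsz, hs⟩
        have h0 : 0 < rk Gg s := hrkpos s hs hsz
        by_cases hlo : rk Gg s < d + 1
        · left; exact ⟨hs, h0, hlo⟩
        · right; exact ⟨hs, by omega⟩
      · rintro (⟨hs, h0, -⟩ | ⟨hs, hge⟩)
        · refine ⟨?_, hs⟩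
          intro heq
          rw [heq, hrkz] at h0
          exact absurd h0 (lt_irrefl 0)
        · refine ⟨?_, hs⟩
          intro heq
          rw [heq, hrkz] at hge
          omega
    have hdisLoHi : Disjoint Lo Hi := by
      rw [Finset.disjoint_left]
      intro s hs hs'
      rw [hLodef, Finset.mem_filter, Finset.mem_Ioo] at hs
      rw [hHidef, Finset.mem_filter] at hs'
      omega
    have hGg_eq : agCost g T (m γ) Gg
        = g (m γ) * L + ((∑ w ∈ Lo, g (m γ - rk Gg w) * T w)
          + (∑ s ∈ Hi, g (m γ - rk Gg s) * T s)) := by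
      unfold agCost
      rw [← Finset.add_sum_erase Gg _ hzGg, hrkz, Nat.sub_zero, hT1, hGgsplit,
        Finset.sum_union hdisLoHi]
    -- inequalities
    have hI1 : (∑ w ∈ Lo, g (m γ - rk Gg w + 1) * T w)
          + (∑ w ∈ Lo, g (m γ - rk Gg w) * L)
        ≤ (∑ w ∈ Lo, g (m γ - rk Gg w) * T w)
          + (∑ w ∈ Lo, g (m γ - rk Gg w + 1) * L) := by
      rw [← Finset.sum_add_distrib, ← Finset.sum_add_distrib]
      apply Finset.sum_le_sum
      intro s _
      exact exch hg (Nat.le_succ _) (hTle s)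
    have hE2 : (∑ w ∈ Lo, g (m γ - rk Gg w + 1) * L) + g (m a1) * L
        = (∑ w ∈ Lo, g (m γ - rk Gg w) * L) + g (m γ) * L := by
      have e1 : ∑ w ∈ Lo, g (m γ - rk Gg w + 1) * L
          = ∑ j ∈ Finset.Ioo 0 (d+1), g (m γ - j + 1) * L := by
        rw [hLodef]
        exact sum_rk_Ioo Gg (fun j => g (m γ - j + 1) * L) (by rw [hcGg]; omega)
      have e2 : ∑ w ∈ Lo, g (m γ - rk Gg w) * L
          = ∑ j ∈ Finset.Ioo 0 (d+1), g (m γ - j) * L := by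
        rw [hLodef]
        exact sum_rk_Ioo Gg (fun j => g (m γ - j) * L) (by rw [hcGg]; omega)
      have e3 : m γ - (d + 1) + 1 = m a1 := by omega
      rw [e1, e2, ← Finset.sum_mul, ← Finset.sum_mul, ← add_mul, ← add_mul,
        show m a1 = m γ - (d+1) + 1 from e3.symm,
        telescope g (by omega) (by omega)]
    have hcost : agCost g T (m a1) A + agCost g T (m γ) B
        ≤ agCost g T (m a1) G1 + agCost g T (m γ) Gg := by
      rw [hA_eq, hB_eq, hGg_eq]
      omega
    obtain ⟨xs, h1, h2, h3⟩ := main_aux g m T x hx a1 γ hne A B hU hdis hcA hcB z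
      (by rw [hAdef]; exact Finset.mem_insert_self z Hi) hcost
    exact ⟨xs, h1, h2, h3⟩
end

section
/- Fix a look-ahead setup (r,h) with 1 ≤ r ≤ h ≤ k. At time t define Z_L(t) = ∑_{i=1}^{h−1} min{Q_i(t), Q_{r−1}(t)} and Z_H(t) = ∑_{i=r}^{h} (Q_i(t) − Q_{r−1}(t)), where Q_i(t) are remaining capacities evolving by decrementing one coordinate per step while preserving nondecreasing order (coordinate r−1 is only decremented when Q_{r−2} < Q_{r−1}). Then for each step, Z_H(t) + Z_L(t) decreases by at most 1, and hence Z_H(i) + Z_L(i) + i − 1 ≤ Z_H(j) + Z_L(j) + j − 1 whenever i < j. -/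
open Finset

/-- H-zone size for look-ahead setup `(r,h)` at time `t`:
`Z_H(t) = ∑_{i=r}^{h} (Q_i(t) − Q_{r−1}(t))`. -/
def ZH (Q : ℕ → ℕ → ℕ) (r h t : ℕ) : ℕ :=
  ∑ i ∈ Finset.Icc r h, (Q t i - Q t (r - 1))

/-- L-zone size for look-ahead setup `(r,h)` at time `t`:
`Z_L(t) = ∑_{i=1}^{h−1} min (Q_i(t)) (Q_{r−1}(t))`. -/
def ZL (Q : ℕ → ℕ → ℕ) (r h t : ℕ) : ℕ :=
  ∑ i ∈ Finset.Icc 1 (h - 1), min (Q t i) (Q t (r - 1))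

/-- Horizon monotonicity: with capacities `Q t 1 ≤ … ≤ Q t k` (and the
convention `Q t 0 = 0`) evolving by decrementing one coordinate `x t ∈ [1,k]`
per step, never decrementing a coordinate while the previous coordinate has
equal value, the quantity `Z_H + Z_L` decreases by at most `1` per step, and
hence the look-ahead horizon `Z_H(t) + Z_L(t) + t − 1` never decreases. -/
theorem lookahead_horizon_monotone (k r h : ℕ)
    (hr : 1 ≤ r) (hrh : r ≤ h) (hhk : h ≤ k)
    (Q : ℕ → ℕ → ℕ) (x : ℕ → ℕ)
    (hx : ∀ t, 1 ≤ x t ∧ x t ≤ k)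
    (hzero : ∀ t, Q t 0 = 0)
    (hstep : ∀ t, Q (t + 1) = Function.update (Q t) (x t) (Q t (x t) - 1))
    (hmono : ∀ t, ∀ i j : ℕ, i ≤ j → j ≤ k → Q t i ≤ Q t j)
    (hchoice : ∀ t, x t = 1 ∨ Q t (x t - 1) < Q t (x t)) :
    (∀ t, ZH Q r h t + ZL Q r h t ≤ ZH Q r h (t + 1) + ZL Q r h (t + 1) + 1) ∧
    (∀ i j : ℕ, i < j →
      ZH Q r h i + ZL Q r h i + i - 1 ≤ ZH Q r h j + ZL Q r h j + j - 1) := by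
  have key : ∀ t, ZH Q r h t + ZL Q r h t ≤ ZH Q r h (t + 1) + ZL Q r h (t + 1) + 1 := by
    intro t
    obtain ⟨hc1, hck⟩ := hx t
    have hQ : ∀ i, Q (t+1) i = if i = x t then Q t (x t) - 1 else Q t i := by
      intro i
      rw [hstep t, Function.update_apply]
    by_cases hc : x t = r - 1
    · -- decrementing coordinate r-1
      have hr2 : 2 ≤ r := by omega
      by_cases ha : Q t (r-1) = 0
      · have hEq : ∀ i, Q (t+1) i = Q t i := by
          intro i
          rw [hQ i]
          by_cases hi : i = x t
          · rw [if_pos hi, hi, hc, ha]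
          · rw [if_neg hi]
        have h1 : ZH Q r h (t+1) = ZH Q r h t := by
          unfold ZH; exact Finset.sum_congr rfl (fun i _ => by rw [hEq, hEq])
        have h2 : ZL Q r h (t+1) = ZL Q r h t := by
          unfold ZL; exact Finset.sum_congr rfl (fun i _ => by rw [hEq, hEq])
        omega
      · have ha1 : 1 ≤ Q t (r-1) := by omega
        have hlow : ∀ i, 1 ≤ i → i < r - 1 → Q t i < Q t (r-1) := by
          intro i h1i h2i
          rcases hchoice t with h' | h'
          · omega
          · rw [hc] at h'
            have := hmono t i (r-1-1) (by omega) (by omega)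
            omega
        have hup : Q (t+1) (r-1) = Q t (r-1) - 1 := by rw [hQ, if_pos hc.symm, hc]
        have hZH : ZH Q r h (t+1) = ZH Q r h t + (h + 1 - r) := by
          unfold ZH
          have hterm : ∀ i ∈ Finset.Icc r h, Q (t+1) i - Q (t+1) (r-1)
              = (Q t i - Q t (r-1)) + 1 := by
            intro i hi
            rw [Finset.mem_Icc] at hi
            have hiq : Q (t+1) i = Q t i := by
              rw [hQ, if_neg (by omega)]
            have hge : Q t (r-1) ≤ Q t i := hmono t (r-1) i (by omega) (by omega)
            rw [hiq, hup]
            omega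
          rw [Finset.sum_congr rfl hterm, Finset.sum_add_distrib, Finset.sum_const,
            smul_eq_mul, mul_one, Nat.card_Icc]
        have hZL : ZL Q r h t = ZL Q r h (t+1) + (h + 1 - r) := by
          unfold ZL
          have hterm : ∀ i ∈ Finset.Icc 1 (h-1), min (Q t i) (Q t (r-1))
              = min (Q (t+1) i) (Q (t+1) (r-1)) + (if r - 1 ≤ i then 1 else 0) := by
            intro i hi
            rw [Finset.mem_Icc] at hi
            rw [hup]
            by_cases hie : i = r - 1
            · rw [hie, hQ, if_pos hc.symm, hc, if_pos le_rfl]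
              omega
            · rw [hQ, if_neg (by omega)]
              by_cases hile : r - 1 ≤ i
              · have hge : Q t (r-1) ≤ Q t i := hmono t (r-1) i hile (by omega)
                rw [if_pos hile]; omega
              · have hlt : Q t i < Q t (r-1) := hlow i hi.1 (by omega)
                rw [if_neg hile]; omega
          rw [Finset.sum_congr rfl hterm, Finset.sum_add_distrib]
          congr 1
          rw [← Finset.sum_filter]
          have hfil : (Finset.Icc 1 (h-1)).filter (fun i => r - 1 ≤ i)
              = Finset.Icc (r-1) (h-1) := by
            ext i; simp only [Finset.mem_filter, Finset.mem_Icc]; omega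
          rw [hfil, Finset.sum_const, smul_eq_mul, mul_one, Nat.card_Icc]
          omega
        omega
    · by_cases hcr : r ≤ x t ∧ x t ≤ h
      · -- decrementing a coordinate in [r, h]
        obtain ⟨hcr1, hcr2⟩ := hcr
        have hup : Q (t+1) (r-1) = Q t (r-1) := by
          rw [hQ, if_neg (by omega)]
        have hba : r = 1 ∨ Q t (r-1) < Q t (x t) := by
          rcases hchoice t with h' | h'
          · left; omega
          · right
            calc Q t (r-1) ≤ Q t (x t - 1) := hmono t (r-1) (x t - 1) (by omega) (by omega)
              _ < Q t (x t) := h'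
        have hminc : min (Q t (x t) - 1) (Q t (r-1)) = min (Q t (x t)) (Q t (r-1)) := by
          rcases hba with h' | h'
          · have h0 : Q t (r-1) = 0 := by rw [show r - 1 = 0 by omega]; exact hzero t
            omega
          · omega
        have hZL : ZL Q r h (t+1) = ZL Q r h t := by
          unfold ZL
          refine Finset.sum_congr rfl fun i hi => ?_
          rw [hup, hQ]
          by_cases hie : i = x t
          · rw [if_pos hie, hie, hminc]
          · rw [if_neg hie]
        have hZH : ZH Q r h t ≤ ZH Q r h (t+1) + 1 := by
          unfold ZH
          have hle : ∀ i ∈ Finset.Icc r h,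
              Q t i - Q t (r-1) ≤ (Q (t+1) i - Q (t+1) (r-1)) + (if i = x t then 1 else 0) := by
            intro i hi
            rw [hup, hQ]
            by_cases hie : i = x t
            · rw [if_pos hie, if_pos hie, hie]; omega
            · rw [if_neg hie, if_neg hie]; omega
          calc ∑ i ∈ Finset.Icc r h, (Q t i - Q t (r-1))
              ≤ ∑ i ∈ Finset.Icc r h,
                  ((Q (t+1) i - Q (t+1) (r-1)) + (if i = x t then 1 else 0)) :=
                Finset.sum_le_sum hle
            _ = (∑ i ∈ Finset.Icc r h, (Q (t+1) i - Q (t+1) (r-1))) +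
                ∑ i ∈ Finset.Icc r h, (if i = x t then 1 else 0) := Finset.sum_add_distrib
            _ ≤ _ + 1 := by
                gcongr
                rw [Finset.sum_ite_eq' (Finset.Icc r h) (x t) (fun _ => 1)]
                split <;> omega
        omega
      · -- coordinate outside [r-1, h]
        have hup : Q (t+1) (r-1) = Q t (r-1) := by
          rw [hQ, if_neg (fun h' => hc h'.symm)]
        have hZH : ZH Q r h (t+1) = ZH Q r h t := by
          unfold ZH
          refine Finset.sum_congr rfl fun i hi => ?_
          rw [Finset.mem_Icc] at hi
          rw [hup, hQ, if_neg (by omega)]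
        have hZL : ZL Q r h t ≤ ZL Q r h (t+1) + 1 := by
          unfold ZL
          have hle : ∀ i ∈ Finset.Icc 1 (h-1),
              min (Q t i) (Q t (r-1)) ≤
                min (Q (t+1) i) (Q (t+1) (r-1)) + (if i = x t then 1 else 0) := by
            intro i hi
            rw [hup, hQ]
            by_cases hie : i = x t
            · rw [if_pos hie, if_pos hie, hie]; omega
            · rw [if_neg hie, if_neg hie]; omega
          calc ∑ i ∈ Finset.Icc 1 (h-1), min (Q t i) (Q t (r-1))
              ≤ ∑ i ∈ Finset.Icc 1 (h-1),
                  (min (Q (t+1) i) (Q (t+1) (r-1)) + (if i = x t then 1 else 0)) :=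
                Finset.sum_le_sum hle
            _ = (∑ i ∈ Finset.Icc 1 (h-1), min (Q (t+1) i) (Q (t+1) (r-1))) +
                ∑ i ∈ Finset.Icc 1 (h-1), (if i = x t then 1 else 0) := Finset.sum_add_distrib
            _ ≤ _ + 1 := by
                gcongr
                rw [Finset.sum_ite_eq' (Finset.Icc 1 (h-1)) (x t) (fun _ => 1)]
                split <;> omega
        omega
  refine ⟨key, ?_⟩
  intro i j hij
  induction j with
  | zero => omega
  | succ n ih =>
    have hk := key n
    by_cases hin : i = n
    · subst hin; omega
    · have := ih (by omega)
      omega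
end
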